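/- For every flow network G=(V,E) and lifted graph G'=(V',E') as above, every feasible integral solution (x,y,y') of the lifted disjoint paths problem satisfies all path inequalities: for every lifted edge vw ∈ E' and every vw-path P in G, y'_{vw} ≥ Σ_{j ∈ P_V: vj∈E} y_{vj} − Σ_{i ∈ P_V∖{v,w}} Σ_{k ∉ P_V: ik∈E} y_{ik}. -/

import Mathlib

open Finset
open scoped Classical

section LiftedDisjointPaths

variable {V : Type*} [Fintype V] [DecidableEq V]

/-- A `vw`-path in the digraph with edge set `E`, given by its (nonempty) list of vertices:
it starts at `v`, ends at `w`, and consecutive vertices are joined by edges of `E`. -/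
def IsPath (E : Finset (V × V)) (v w : V) (p : List V) : Prop :=
  p ≠ [] ∧ p.head? = some v ∧ p.getLast? = some w ∧ p.Chain' (fun a b => (a, b) ∈ E)

/-- The edge list `P_E` of a path given by its vertex list. -/
def pEdges (p : List V) : List (V × V) := p.zip p.tail

/-- The reachability relation `R`: `vw ∈ R` iff `v = w` or there is a `vw`-path in `G`. -/
def Reach (E : Finset (V × V)) (v w : V) : Prop :=
  v = w ∨ ∃ p, IsPath E v w p

/-- `G = (V,E)` is a flow network with source `s` and sink `t`: it is acyclic, every node is
reachable from `s`, and `t` is reachable from every node. -/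
structure IsFlowNetwork (E : Finset (V × V)) (s t : V) : Prop where
  acyclic : ∀ v w : V, (v, w) ∈ E → ¬ Reach E w v
  reach_from_source : ∀ v : V, Reach E s v
  reach_to_sink : ∀ v : V, Reach E v t

/-- The lifted graph `G' = (V', E')` has node set `V' = V ∖ {s,t}`. -/
def IsLiftedGraph (E' : Finset (V × V)) (s t : V) : Prop :=
  ∀ e ∈ E', e.1 ≠ s ∧ e.1 ≠ t ∧ e.2 ≠ s ∧ e.2 ≠ t

/-- `y ∈ [0,1]^E`. -/
def InUnitBox (E : Finset (V × V)) (y : V × V → ℝ) : Prop :=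
  ∀ e ∈ E, 0 ≤ y e ∧ y e ≤ 1

/-! ### Paths in the multigraph `G ∪ G'` -/

/-- Vertex list `P_V` of a path in `G ∪ G'` starting at `v`; each step of `q` records the next
vertex together with a flag saying whether the edge used is a lifted edge. -/
def mVerts (v : V) (q : List (V × Bool)) : List V := v :: q.map Prod.fst

/-- The labelled edge list of a path in `G ∪ G'`. -/
def mEdges (v : V) (q : List (V × Bool)) : List ((V × V) × Bool) :=
  List.zipWith (fun a ub => ((a, ub.1), ub.2)) (mVerts v q) q

/-- `P_E`: the set of base edges of a path in `G ∪ G'`. -/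
def mBase (v : V) (q : List (V × Bool)) : Finset (V × V) :=
  ((mEdges v q).filterMap fun eb => if eb.2 then none else some eb.1).toFinset

/-- `P_{E'}`: the set of lifted edges of a path in `G ∪ G'`. -/
def mLifted (v : V) (q : List (V × Bool)) : Finset (V × V) :=
  ((mEdges v q).filterMap fun eb => if eb.2 then some eb.1 else none).toFinset

/-- A `vw`-path in the multigraph `G ∪ G'`: it starts at `v`, ends at `w`, each base step uses
an edge of `E`, each lifted step uses an edge of `E'`, and the sets of base and lifted edges
used are disjoint. -/
def IsMPath (E E' : Finset (V × V)) (v w : V) (q : List (V × Bool)) : Prop :=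
  (mVerts v q).getLast? = some w ∧
  (∀ eb ∈ mEdges v q, if eb.2 then eb.1 ∈ E' else eb.1 ∈ E) ∧
  Disjoint (mBase v q) (mLifted v q)

/-! ### The families of linear inequalities -/

/-- All path inequalities: for every lifted edge `vw ∈ E'` and every `vw`-path `P` in `G`,
`y'_{vw} ≥ Σ_{j ∈ P_V : vj ∈ E} y_{vj} − Σ_{i ∈ P_V∖{v,w}} Σ_{k ∉ P_V : ik ∈ E} y_{ik}`. -/
def PathIneqs (E E' : Finset (V × V)) (y y' : V × V → ℝ) : Prop :=
  ∀ v w : V, (v, w) ∈ E' → ∀ p : List V, IsPath E v w p →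
    (∑ j ∈ p.toFinset.filter (fun j => (v, j) ∈ E), y (v, j))
      - (∑ i ∈ p.toFinset \ {v, w},
          ∑ k ∈ (univ \ p.toFinset).filter (fun k => (i, k) ∈ E), y (i, k))
    ≤ y' (v, w)

/-- All lifted multicut path inequalities: for every lifted edge `vw ∈ E'` and every
`vw`-path `P` in `G`, `y'_{vw} ≥ Σ_{ij ∈ P_E} (y_{ij} − 1) + 1`. -/
def MulticutPathIneqs (E E' : Finset (V × V)) (y y' : V × V → ℝ) : Prop :=
  ∀ v w : V, (v, w) ∈ E' → ∀ p : List V, IsPath E v w p →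
    (∑ e ∈ (pEdges p).toFinset, (y e - 1)) + 1 ≤ y' (v, w)

/-- All lifted path inequalities: for every lifted edge `vw ∈ E'` and every `vw`-path `P` in
`G ∪ G'`, `y'_{vw} ≥ Σ_{j ∈ P_V : vj∈E} y_{vj} − Σ_{i ∈ P_V∖{v,w}} Σ_{k ∉ P_V : ik∈E} y_{ik}
+ Σ_{ij ∈ P_{E'}} y'_{ij} − Σ_{ij ∈ P_{E'} : ij∈E} y_{ij}`. -/
def LiftedPathIneqs (E E' : Finset (V × V)) (y y' : V × V → ℝ) : Prop :=
  ∀ v w : V, (v, w) ∈ E' → ∀ q : List (V × Bool), IsMPath E E' v w q →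
    (∑ j ∈ (mVerts v q).toFinset.filter (fun j => (v, j) ∈ E), y (v, j))
      - (∑ i ∈ (mVerts v q).toFinset \ {v, w},
          ∑ k ∈ (univ \ (mVerts v q).toFinset).filter (fun k => (i, k) ∈ E), y (i, k))
      + (∑ e ∈ mLifted v q, y' e)
      - (∑ e ∈ (mLifted v q).filter (fun e => e ∈ E), y e)
    ≤ y' (v, w)

/-- All path-induced cut inequalities: for every lifted edge `vw ∈ E'`, every node `u` with
`uw ∈ R` and `u ≠ w`, and every `vu`-path `P` in `G`,
`y'_{vw} ≤ Σ_{i ∈ P_V} Σ_{k ∉ P_V : ik∈E, kw∈R} y_{ik}`. -/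
def PathCutIneqs (E E' : Finset (V × V)) (y y' : V × V → ℝ) : Prop :=
  ∀ v w : V, (v, w) ∈ E' → ∀ u : V, Reach E u w → u ≠ w → ∀ p : List V, IsPath E v u p →
    y' (v, w) ≤
      ∑ i ∈ p.toFinset,
        ∑ k ∈ (univ \ p.toFinset).filter (fun k => (i, k) ∈ E ∧ Reach E k w), y (i, k)

/-- All lifted path-induced cut inequalities: for every lifted edge `vw ∈ E'`, every node `u`
with `uw ∈ R` and `u ≠ w`, and every `vu`-path `P` in `G ∪ G'`,
`y'_{vw} ≤ Σ_{i ∈ P_V} Σ_{k ∉ P_V : ik∈E, kw∈R} y_{ik} − Σ_{ij ∈ P_{E'}} y'_{ij}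
+ Σ_{ij ∈ P_{E'} : ij∈E} y_{ij}`. -/
def LiftedPathCutIneqs (E E' : Finset (V × V)) (y y' : V × V → ℝ) : Prop :=
  ∀ v w : V, (v, w) ∈ E' → ∀ u : V, Reach E u w → u ≠ w →
    ∀ q : List (V × Bool), IsMPath E E' v u q →
    y' (v, w) ≤
      (∑ i ∈ (mVerts v q).toFinset,
        ∑ k ∈ (univ \ (mVerts v q).toFinset).filter (fun k => (i, k) ∈ E ∧ Reach E k w),
          y (i, k))
      - (∑ e ∈ mLifted v q, y' e)
      + (∑ e ∈ (mLifted v q).filter (fun e => e ∈ E), y e)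

/-- All strengthened lifted path-induced cut inequalities: for every lifted edge `vw ∈ E'`
and every `vu`-path `P` in `G ∪ G'` with `uw ∈ E'`,
`y'_{vw} ≤ Σ_{i ∈ P_V∖{u}} Σ_{k ∉ P_V : ik∈E, kw∈R} y_{ik} − Σ_{ij ∈ P_{E'}} y'_{ij}
+ Σ_{ij ∈ P_{E'} : ij∈E} y_{ij} + y'_{uw}`. -/
def StrongLiftedPathCutIneqs (E E' : Finset (V × V)) (y y' : V × V → ℝ) : Prop :=
  ∀ v w : V, (v, w) ∈ E' → ∀ u : V, (u, w) ∈ E' →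
    ∀ q : List (V × Bool), IsMPath E E' v u q →
    y' (v, w) ≤
      (∑ i ∈ (mVerts v q).toFinset \ {u},
        ∑ k ∈ (univ \ (mVerts v q).toFinset).filter (fun k => (i, k) ∈ E ∧ Reach E k w),
          y (i, k))
      - (∑ e ∈ mLifted v q, y' e)
      + (∑ e ∈ (mLifted v q).filter (fun e => e ∈ E), y e)
      + y' (u, w)

/-- All symmetric path-induced cut inequalities: for every lifted edge `vw ∈ E'`, every node
`u` with `vu ∈ R` and `u ≠ v`, and every `uw`-path `P` in `G`,
`y'_{vw} ≤ Σ_{i ∈ P_V} Σ_{k ∉ P_V : ki∈E, vk∈R} y_{ki}`. -/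
def SymPathCutIneqs (E E' : Finset (V × V)) (y y' : V × V → ℝ) : Prop :=
  ∀ v w : V, (v, w) ∈ E' → ∀ u : V, Reach E v u → u ≠ v → ∀ p : List V, IsPath E u w p →
    y' (v, w) ≤
      ∑ i ∈ p.toFinset,
        ∑ k ∈ (univ \ p.toFinset).filter (fun k => (k, i) ∈ E ∧ Reach E v k), y (k, i)

/-- All symmetric lifted path-induced cut inequalities: for every lifted edge `vw ∈ E'`,
every node `u` with `vu ∈ R` and `u ≠ v`, and every `uw`-path `P` in `G ∪ G'`,
`y'_{vw} ≤ Σ_{i ∈ P_V} Σ_{k ∉ P_V : ki∈E, vk∈R} y_{ki} − Σ_{ij ∈ P_{E'}} y'_{ij}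
+ Σ_{ij ∈ P_{E'} : ij∈E} y_{ij}`. -/
def SymLiftedPathCutIneqs (E E' : Finset (V × V)) (y y' : V × V → ℝ) : Prop :=
  ∀ v w : V, (v, w) ∈ E' → ∀ u : V, Reach E v u → u ≠ v →
    ∀ q : List (V × Bool), IsMPath E E' u w q →
    y' (v, w) ≤
      (∑ i ∈ (mVerts u q).toFinset,
        ∑ k ∈ (univ \ (mVerts u q).toFinset).filter (fun k => (k, i) ∈ E ∧ Reach E v k),
          y (k, i))
      - (∑ e ∈ mLifted u q, y' e)
      + (∑ e ∈ (mLifted u q).filter (fun e => e ∈ E), y e)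

/-- All strengthened symmetric lifted path-induced cut inequalities: for every lifted edge
`vw ∈ E'` and every `uw`-path `P` in `G ∪ G'` with `vu ∈ E'`,
`y'_{vw} ≤ Σ_{i ∈ P_V∖{u}} Σ_{k ∉ P_V : ki∈E, vk∈R} y_{ki} − Σ_{ij ∈ P_{E'}} y'_{ij}
+ Σ_{ij ∈ P_{E'} : ij∈E} y_{ij} + y'_{vu}`. -/
def StrongSymLiftedPathCutIneqs (E E' : Finset (V × V)) (y y' : V × V → ℝ) : Prop :=
  ∀ v w : V, (v, w) ∈ E' → ∀ u : V, (v, u) ∈ E' →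
    ∀ q : List (V × Bool), IsMPath E E' u w q →
    y' (v, w) ≤
      (∑ i ∈ (mVerts u q).toFinset \ {u},
        ∑ k ∈ (univ \ (mVerts u q).toFinset).filter (fun k => (k, i) ∈ E ∧ Reach E v k),
          y (k, i))
      - (∑ e ∈ mLifted u q, y' e)
      + (∑ e ∈ (mLifted u q).filter (fun e => e ∈ E), y e)
      + y' (v, u)

/-- The two single node cut inequalities for every lifted edge `vw ∈ E'`:
`y'_{vw} ≤ Σ_{u : vu∈E, uw∈R} y_{vu}` and `y'_{vw} ≤ Σ_{u : uw∈E, vu∈R} y_{uw}`. -/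
def SingleNodeCutIneqs (E E' : Finset (V × V)) (y y' : V × V → ℝ) : Prop :=
  ∀ v w : V, (v, w) ∈ E' →
    (y' (v, w) ≤ ∑ u ∈ univ.filter (fun u => (v, u) ∈ E ∧ Reach E u w), y (v, u)) ∧
    (y' (v, w) ≤ ∑ u ∈ univ.filter (fun u => (u, w) ∈ E ∧ Reach E v u), y (u, w))

/-- A feasible integral solution `(x,y,y')` of the lifted disjoint paths problem:
`x,y,y'` are binary, flow conservation holds at every node other than `s` and `t`, and a
lifted edge is active iff there is an active path in `G` between its endpoints. -/
def FeasibleIntegral (E E' : Finset (V × V)) (s t : V)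
    (x : V → ℝ) (y y' : V × V → ℝ) : Prop :=
  (∀ v : V, x v = 0 ∨ x v = 1) ∧
  (∀ e ∈ E, y e = 0 ∨ y e = 1) ∧
  (∀ e ∈ E', y' e = 0 ∨ y' e = 1) ∧
  (∀ v : V, v ≠ s → v ≠ t →
    (∑ u ∈ univ.filter (fun u => (u, v) ∈ E), y (u, v)) = x v ∧
    (∑ w ∈ univ.filter (fun w => (v, w) ∈ E), y (v, w)) = x v) ∧
  (∀ v w : V, (v, w) ∈ E' →
    (y' (v, w) = 1 ↔ ∃ p : List V, IsPath E v w p ∧ ∀ e ∈ pEdges p, y e = 1))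

end LiftedDisjointPaths


section Helpers

variable {V : Type*} [Fintype V] [DecidableEq V] {E : Finset (V × V)}

lemma pEdges_cons_cons (a b : V) (l : List V) :
    pEdges (a :: b :: l) = (a, b) :: pEdges (b :: l) := by
  simp [pEdges]

lemma pEdges_singleton (a : V) : pEdges [a] = [] := by simp [pEdges]

lemma pEdges_subset_of_chain' :
    ∀ {p : List V}, p.Chain' (fun a b => (a, b) ∈ E) → ∀ e ∈ pEdges p, e ∈ E
  | [], _, e, h => by simp [pEdges] at h
  | [a], _, e, h => by simp [pEdges] at h
  | a :: b :: l, hc, e, h => by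
      simp only [List.Chain', List.isChain_cons_cons] at hc
      rw [pEdges_cons_cons, List.mem_cons] at h
      rcases h with rfl | h
      · exact hc.1
      · exact pEdges_subset_of_chain' hc.2 e h

lemma reflTransGen_of_isPath :
    ∀ (p : List V) (v w : V), IsPath E v w p →
      Relation.ReflTransGen (fun a b => (a, b) ∈ E) v w
  | [], v, w, h => absurd rfl h.1
  | [a], v, w, h => by
      obtain ⟨-, h1, h2, -⟩ := h
      simp only [List.head?_cons, Option.some.injEq] at h1
      simp only [List.getLast?_singleton, Option.some.injEq] at h2
      subst h1; subst h2; exact Relation.ReflTransGen.refl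
  | a :: b :: l, v, w, h => by
      obtain ⟨-, h1, h2, h3⟩ := h
      simp only [List.head?_cons, Option.some.injEq] at h1
      subst h1
      simp only [List.Chain', List.isChain_cons_cons] at h3
      refine Relation.ReflTransGen.head h3.1 ?_
      exact reflTransGen_of_isPath (b :: l) b w
        ⟨by simp, rfl, by simpa using h2, h3.2⟩

lemma isPath_append {v b c : V} {p : List V}
    (hp : IsPath E v b p) (h : (b, c) ∈ E) : IsPath E v c (p ++ [c]) := by
  obtain ⟨hne, h1, h2, h3⟩ := hp
  refine ⟨by simp, ?_, ?_, ?_⟩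
  · cases p with
    | nil => exact absurd rfl hne
    | cons a l => simpa using h1
  · simp
  · simp only [List.Chain']
    rw [List.isChain_append]
    refine ⟨h3, List.isChain_singleton _, fun x hx y hy => ?_⟩
    simp only [List.head?_cons, Option.mem_def, Option.some.injEq] at hy
    subst hy
    rw [h2] at hx
    simp only [Option.mem_def, Option.some.injEq] at hx
    subst hx
    exact h

lemma reach_of_reflTransGen {v w : V}
    (h : Relation.ReflTransGen (fun a b => (a, b) ∈ E) v w) : Reach E v w := by
  induction h with
  | refl => exact Or.inl rfl
  | @tail b c hvb hbc ih =>
    rcases ih with rfl | ⟨p, hp⟩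
    · refine Or.inr ⟨[v, c], by simp, rfl, rfl, ?_⟩
      exact List.isChain_pair.2 hbc
    · exact Or.inr ⟨p ++ [c], isPath_append hp hbc⟩

lemma pEdges_concat :
    ∀ (p : List V) (b c : V), p.getLast? = some b →
      pEdges (p ++ [c]) = pEdges p ++ [(b, c)]
  | [], _, _, h => by simp at h
  | [a], b, c, h => by
      simp only [List.getLast?_singleton, Option.some.injEq] at h
      subst h; simp [pEdges]
  | a :: a' :: l, b, c, h => by
      rw [List.getLast?_cons_cons] at h
      show pEdges (a :: a' :: (l ++ [c])) = _
      rw [pEdges_cons_cons]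
      have : a' :: (l ++ [c]) = (a' :: l) ++ [c] := by simp
      rw [this, pEdges_concat (a' :: l) b c h, pEdges_cons_cons]
      simp

lemma exists_mem_pEdges_snd :
    ∀ (p : List V) (i : V), 2 ≤ p.length → p.getLast? = some i →
      ∃ u, (u, i) ∈ pEdges p
  | [], _, h, _ => by simp at h
  | [a], _, h, _ => by simp at h
  | [a, b], i, _, h => by
      simp only [List.getLast?_cons_cons, List.getLast?_singleton,
        Option.some.injEq] at h
      subst h; exact ⟨a, by simp [pEdges]⟩
  | a :: b :: c :: l, i, _, h => by
      rw [List.getLast?_cons_cons] at h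
      obtain ⟨u, hu⟩ := exists_mem_pEdges_snd (b :: c :: l) i (by simp) h
      exact ⟨u, by rw [pEdges_cons_cons]; exact List.mem_cons_of_mem _ hu⟩

lemma two_le_length_of_ne {p : List V} {v i : V}
    (h1 : p.head? = some v) (h2 : p.getLast? = some i) (hne : v ≠ i) :
    2 ≤ p.length := by
  match p with
  | [] => simp at h1
  | [a] =>
      simp only [List.head?_cons, Option.some.injEq] at h1
      simp only [List.getLast?_singleton, Option.some.injEq] at h2
      exact absurd (h1 ▸ h2 ▸ rfl) hne
  | a :: b :: l => simp

lemma exists_mem_pEdges_fst :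
    ∀ (p : List V) (i w : V), i ∈ p → p.getLast? = some w → i ≠ w →
      ∃ k, (i, k) ∈ pEdges p
  | [], _, _, h, _, _ => by simp at h
  | [a], i, w, h, hl, hne => by
      simp only [List.mem_singleton] at h
      simp only [List.getLast?_singleton, Option.some.injEq] at hl
      exact absurd (h ▸ hl ▸ rfl) hne
  | a :: b :: l, i, w, h, hl, hne => by
      rw [List.getLast?_cons_cons] at hl
      rcases List.mem_cons.1 h with rfl | h'
      · exact ⟨b, by rw [pEdges_cons_cons]; simp⟩
      · obtain ⟨k, hk⟩ := exists_mem_pEdges_fst (b :: l) i w h' hl hne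
        exact ⟨k, by rw [pEdges_cons_cons]; exact List.mem_cons_of_mem _ hk⟩

lemma key_step (E : Finset (V × V)) (s t : V)
    (hG : IsFlowNetwork E s t)
    (x : V → ℝ) (y : V × V → ℝ)
    (hx : ∀ v : V, x v = 0 ∨ x v = 1)
    (hy : ∀ e ∈ E, y e = 0 ∨ y e = 1)
    (hflow : ∀ v : V, v ≠ s → v ≠ t →
      (∑ u ∈ univ.filter (fun u => (u, v) ∈ E), y (u, v)) = x v ∧
      (∑ w ∈ univ.filter (fun w => (v, w) ∈ E), y (v, w)) = x v)
    (v w : V) (p : List V) (hp : IsPath E v w p) :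
    ∀ n : ℕ, ∀ i : V,
      (univ.filter
        (fun u => Relation.ReflTransGen (fun a b => (a, b) ∈ E) i u)).card ≤ n →
      i ∈ p.toFinset → i ≠ v → i ≠ w →
      (∃ q, IsPath E v i q ∧ ∀ e ∈ pEdges q, y e = 1) →
      (∃ q', IsPath E v w q' ∧ ∀ e ∈ pEdges q', y e = 1) ∨
      1 ≤ ∑ i' ∈ p.toFinset \ {v, w},
            ∑ k ∈ (univ \ p.toFinset).filter (fun k => (i', k) ∈ E), y (i', k) := by
  have hy0 : ∀ e ∈ E, (0 : ℝ) ≤ y e := by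
    intro e he; rcases hy e he with h | h <;> rw [h] <;> norm_num
  intro n
  induction n with
  | zero =>
      intro i hcard _ _ _ _
      have hmem : i ∈ univ.filter
          (fun u => Relation.ReflTransGen (fun a b => (a, b) ∈ E) i u) :=
        mem_filter.2 ⟨mem_univ i, Relation.ReflTransGen.refl⟩
      have := Finset.card_pos.2 ⟨i, hmem⟩
      omega
  | succ n ih =>
      intro i hcard hip hiv hiw hq
      obtain ⟨q, hq, hqact⟩ := hq
      -- last edge of q, into i
      obtain ⟨u, hu⟩ := exists_mem_pEdges_snd q i
        (two_le_length_of_ne hq.2.1 hq.2.2.1 (Ne.symm hiv)) hq.2.2.1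
      have huE : (u, i) ∈ E := pEdges_subset_of_chain' hq.2.2.2 _ hu
      have huact : y (u, i) = 1 := hqact _ hu
      -- i ≠ s and i ≠ t
      have his : i ≠ s := by
        intro hEq
        exact hG.acyclic u i huE (hEq ▸ hG.reach_from_source u)
      have hit : i ≠ t := by
        intro hEq
        obtain ⟨k0, hk0⟩ := exists_mem_pEdges_fst p i w
          (List.mem_toFinset.1 hip) hp.2.2.1 hiw
        exact hG.acyclic i k0 (pEdges_subset_of_chain' hp.2.2.2 _ hk0)
          (hEq ▸ hG.reach_to_sink k0)
      obtain ⟨hin, hout⟩ := hflow i his hit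
      -- x i = 1
      have hxi : x i = 1 := by
        have h1 : (1 : ℝ) ≤ ∑ u' ∈ univ.filter (fun u' => (u', i) ∈ E), y (u', i) := by
          rw [← huact]
          refine Finset.single_le_sum (f := fun u' => y (u', i)) (fun u' hu' => ?_)
            (mem_filter.2 ⟨mem_univ u, huE⟩)
          exact hy0 _ (mem_filter.1 hu').2
        rw [hin] at h1
        rcases hx i with h | h
        · rw [h] at h1; norm_num at h1
        · exact h
      -- active outgoing edge from i
      have hsum : ∑ k ∈ univ.filter (fun k => (i, k) ∈ E), y (i, k) = 1 := by
        rw [hout, hxi]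
      obtain ⟨k', hk'mem, hk'ne⟩ :=
        Finset.exists_ne_zero_of_sum_ne_zero (by rw [hsum]; norm_num :
          ∑ k ∈ univ.filter (fun k => (i, k) ∈ E), y (i, k) ≠ 0)
      have hk'E : (i, k') ∈ E := (mem_filter.1 hk'mem).2
      have hk'act : y (i, k') = 1 := by
        rcases hy _ hk'E with h | h
        · exact absurd h hk'ne
        · exact h
      have hRTvi : Relation.ReflTransGen (fun a b => (a, b) ∈ E) v i :=
        reflTransGen_of_isPath q v i hq
      have hk'v : k' ≠ v := by
        rintro rfl
        exact hG.acyclic i k' hk'E (reach_of_reflTransGen hRTvi)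
      have hqk' : IsPath E v k' (q ++ [k']) := isPath_append hq hk'E
      have hqk'act : ∀ e ∈ pEdges (q ++ [k']), y e = 1 := by
        intro e he
        rw [pEdges_concat q i k' hq.2.2.1, List.mem_append] at he
        rcases he with he | he
        · exact hqact _ he
        · simp only [List.mem_singleton] at he
          rw [he]; exact hk'act
      by_cases hk'p : k' ∈ p.toFinset
      · by_cases hk'w : k' = w
        · subst hk'w
          exact Or.inl ⟨q ++ [k'], hqk', hqk'act⟩
        · -- recurse
          refine ih k' ?_ hk'p hk'v hk'w ⟨q ++ [k'], hqk', hqk'act⟩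
          have hss : univ.filter
              (fun u => Relation.ReflTransGen (fun a b => (a, b) ∈ E) k' u) ⊂
              univ.filter
              (fun u => Relation.ReflTransGen (fun a b => (a, b) ∈ E) i u) := by
            constructor
            · intro u' hu'
              refine mem_filter.2 ⟨mem_univ _, ?_⟩
              exact Relation.ReflTransGen.head hk'E (mem_filter.1 hu').2
            · intro hsub
              have hi1 : i ∈ univ.filter
                  (fun u => Relation.ReflTransGen (fun a b => (a, b) ∈ E) i u) :=
                mem_filter.2 ⟨mem_univ i, Relation.ReflTransGen.refl⟩
              have hi2 := mem_filter.1 (hsub hi1)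
              exact hG.acyclic i k' hk'E (reach_of_reflTransGen hi2.2)
          have := Finset.card_lt_card hss
          omega
      · -- edge leaves the path: S2 ≥ 1
        right
        have hiin : i ∈ p.toFinset \ ({v, w} : Finset V) := by
          rw [mem_sdiff]
          exact ⟨hip, by simp [hiv, hiw]⟩
        have hinner : (1 : ℝ) ≤
            ∑ k ∈ (univ \ p.toFinset).filter (fun k => (i, k) ∈ E), y (i, k) := by
          rw [← hk'act]
          refine Finset.single_le_sum (fun k hk => hy0 _ (mem_filter.1 hk).2) ?_
          exact mem_filter.2 ⟨mem_sdiff.2 ⟨mem_univ _, hk'p⟩, hk'E⟩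
        refine le_trans hinner ?_
        refine Finset.single_le_sum
          (f := fun i' => ∑ k ∈ (univ \ p.toFinset).filter (fun k => (i', k) ∈ E), y (i', k))
          (fun i' _ => ?_) hiin
        exact Finset.sum_nonneg (fun k hk => hy0 _ (mem_filter.1 hk).2)

end Helpers

/-- Every feasible integral solution of the lifted disjoint paths problem
satisfies all path inequalities. -/
theorem feasible_integral_satisfies_path_ineqs
    {V : Type*} [Fintype V] [DecidableEq V] (E E' : Finset (V × V)) (s t : V)
    (hG : IsFlowNetwork E s t) (hG' : IsLiftedGraph E' s t)
    (x : V → ℝ) (y y' : V × V → ℝ)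
    (h : FeasibleIntegral E E' s t x y y') :
    PathIneqs E E' y y' := by
  obtain ⟨hx, hy, hy', hflow, hiff⟩ := h
  have hy0 : ∀ e ∈ E, (0 : ℝ) ≤ y e := by
    intro e he; rcases hy e he with h | h <;> rw [h] <;> norm_num
  intro v w hvw p hp
  obtain ⟨hvs, hvt, hws, hwt⟩ := hG' (v, w) hvw
  have hS2 : (0 : ℝ) ≤ ∑ i ∈ p.toFinset \ {v, w},
      ∑ k ∈ (univ \ p.toFinset).filter (fun k => (i, k) ∈ E), y (i, k) :=
    Finset.sum_nonneg fun i _ =>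
      Finset.sum_nonneg fun k hk => hy0 _ (mem_filter.1 hk).2
  have hS1 : (∑ j ∈ p.toFinset.filter (fun j => (v, j) ∈ E), y (v, j)) ≤ x v := by
    rw [← (hflow v hvs hvt).2]
    refine Finset.sum_le_sum_of_subset_of_nonneg ?_ (fun j hj _ => ?_)
    · intro j hj
      exact mem_filter.2 ⟨mem_univ _, (mem_filter.1 hj).2⟩
    · exact hy0 _ (mem_filter.1 hj).2
  rcases hy' (v, w) hvw with h0 | h1
  · -- y'(v,w) = 0 : show S1 ≤ S2
    rw [h0]
    by_cases hpos : ∀ j ∈ p.toFinset.filter (fun j => (v, j) ∈ E), y (v, j) = 0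
    · have : (∑ j ∈ p.toFinset.filter (fun j => (v, j) ∈ E), y (v, j)) = 0 :=
        Finset.sum_eq_zero hpos
      rw [this]; linarith
    · push_neg at hpos
      obtain ⟨j0, hj0mem, hj0ne⟩ := hpos
      have hj0E : (v, j0) ∈ E := (mem_filter.1 hj0mem).2
      have hj0p : j0 ∈ p.toFinset := (mem_filter.1 hj0mem).1
      have hj0act : y (v, j0) = 1 := by
        rcases hy _ hj0E with h | h
        · exact absurd h hj0ne
        · exact h
      have hxv : x v = 1 := by
        have h1 : (1 : ℝ) ≤ ∑ u ∈ univ.filter (fun u => (v, u) ∈ E), y (v, u) := by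
          rw [← hj0act]
          refine Finset.single_le_sum (fun u hu => hy0 _ (mem_filter.1 hu).2)
            (mem_filter.2 ⟨mem_univ _, hj0E⟩)
        rw [(hflow v hvs hvt).2] at h1
        rcases hx v with h | h
        · rw [h] at h1; norm_num at h1
        · exact h
      have hj0v : j0 ≠ v := by
        intro hEq
        exact hG.acyclic v j0 hj0E (hEq ▸ Or.inl rfl)
      have hj0w : j0 ≠ w := by
        intro hEq
        have hpath : IsPath E v w [v, w] := by
          refine ⟨by simp, rfl, by simp, ?_⟩
          simp only [List.Chain', List.isChain_cons_cons, List.isChain_singleton, and_true]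
          exact hEq ▸ hj0E
        have : y' (v, w) = 1 := (hiff v w hvw).2 ⟨[v, w], hpath, by
          intro e he
          simp only [pEdges_cons_cons, pEdges_singleton, List.mem_singleton] at he
          rw [he, ← hEq]; exact hj0act⟩
        rw [h0] at this; norm_num at this
      have hqpath : IsPath E v j0 [v, j0] := by
        refine ⟨by simp, rfl, by simp, ?_⟩
        exact List.isChain_pair.2 hj0E
      have hqact : ∀ e ∈ pEdges [v, j0], y e = 1 := by
        intro e he
        simp only [pEdges_cons_cons, pEdges_singleton, List.mem_singleton] at he
        rw [he]; exact hj0act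
      rcases key_step E s t hG x y hx hy hflow v w p hp
          (univ.filter
            (fun u => Relation.ReflTransGen (fun a b => (a, b) ∈ E) j0 u)).card
          j0 le_rfl hj0p hj0v hj0w ⟨[v, j0], hqpath, hqact⟩ with
        hleft | hright
      · obtain ⟨q', hq', hq'act⟩ := hleft
        have : y' (v, w) = 1 := (hiff v w hvw).2 ⟨q', hq', hq'act⟩
        rw [h0] at this; norm_num at this
      · linarith
  · -- y'(v,w) = 1
    rw [h1]
    rcases hx v with h | h <;> rw [h] at hS1 <;> linarith
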